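/- In W = k[D] ⊗ Aₙ[v] (n ≥ 1), set V := v, Xᵢ := vξᵢ, Pᵢ := ∂ᵢ. Then the induced locality function equals N₂, i.e.: N_W(V,V) = N_W(V,Xⱼ) = N_W(Xᵢ,V) = N_W(Pᵢ,V) = N_W(Pᵢ,Xⱼ) = 2 for all i,j; N_W(Xᵢ,Xⱼ) = 2 for i ≠ j and N_W(Xᵢ,Xᵢ) = 0; N_W(V,Pⱼ) = N_W(Xᵢ,Pⱼ) = 1 for all i,j; N_W(Pᵢ,Pⱼ) = 1 for i ≠ j and N_W(Pᵢ,Pᵢ) = 0. -/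

import Mathlib

/-! ### Conformal algebras: basic definitions -/

/-- A conformal algebra over a field `k`: a `k`-vector space with a linear map `D`
and a family of bilinear `n`-th products satisfying (C1) locality, (C2) and (C3). -/
structure ConfAlg (k : Type) [Field k] (C : Type) [AddCommGroup C] [Module k C] where
  Dmap : C →ₗ[k] C
  prod : ℕ → C →ₗ[k] C →ₗ[k] C
  locality : ∀ a b : C, ∃ N : ℕ, ∀ m, N ≤ m → prod m a b = 0
  axC2 : ∀ (m : ℕ) (a b : C), prod m (Dmap a) b = -((m : k)) • prod (m - 1) a b
  axC3 : ∀ (m : ℕ) (a b : C),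
    prod m a (Dmap b) = Dmap (prod m a b) + (m : k) • prod (m - 1) a b

section BasicDefs

variable {k : Type} [Field k] {C : Type} [AddCommGroup C] [Module k C]

/-- Left associativity identity for a conformal algebra. -/
def ConfAlg.IsAssoc (A : ConfAlg k C) : Prop :=
  ∀ (nn m : ℕ) (a b c : C),
    A.prod m (A.prod nn a b) c =
      ∑ s ∈ Finset.range (nn + 1),
        ((-1 : k) ^ s * (nn.choose s : k)) • A.prod (nn - s) a (A.prod (m + s) b c)

/-- A ℤ₂-grading of a conformal algebra: `grade false` is the even part,
`grade true` the odd part. -/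
structure ConfGrading (A : ConfAlg k C) where
  grade : Bool → Submodule k C
  inf_bot : grade false ⊓ grade true = ⊥
  sup_top : grade false ⊔ grade true = ⊤
  D_mem : ∀ (i : Bool), ∀ x ∈ grade i, A.Dmap x ∈ grade i
  prod_mem : ∀ (i j : Bool) (m : ℕ) (x y : C), x ∈ grade i → y ∈ grade j →
    A.prod m x y ∈ grade (xor i j)

/-- The "conjugate" product `{b ∘ₘ a} = ∑_{s ≥ 0} ((-1)^{m+s}/s!) • Dˢ (b ∘_{m+s} a)`,
a finite sum by locality, expressed via `finsum`. -/
noncomputable def cbrR (D : C →ₗ[k] C) (P : ℕ → C →ₗ[k] C →ₗ[k] C)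
    (m : ℕ) (b a : C) : C :=
  ∑ᶠ s : ℕ, ((-1 : k) ^ (m + s) * ((Nat.factorial s : k))⁻¹) • (D ^ s) (P (m + s) b a)

/-- The super-commutator `[a ∘ₘ b] = a ∘ₘ b - (-1)^{p(a)p(b)} {b ∘ₘ a}` for homogeneous
`a, b` of parities `pa, pb` (`false` = even, `true` = odd). -/
noncomputable def sbrR (D : C →ₗ[k] C) (P : ℕ → C →ₗ[k] C →ₗ[k] C)
    (pa pb : Bool) (m : ℕ) (a b : C) : C :=
  P m a b - (if pa && pb then (-1 : k) else 1) • cbrR D P m b a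

/-- The defining relations of the Lie conformal superalgebra `Wₙ`, for homogeneous
elements `V` (even), `X i`, `Pd i` (odd) of an associative conformal algebra with
derivation `D` and products `P`. -/
noncomputable def WRelsR (D : C →ₗ[k] C) (P : ℕ → C →ₗ[k] C →ₗ[k] C) {n : ℕ}
    (V : C) (X Pd : Fin n → C) : Prop :=
  (∀ i j, sbrR D P true true 0 (X i) (X j) = - sbrR D P true true 0 (X j) (X i)) ∧
  (∀ (m : ℕ) (i j), sbrR D P true true m (Pd i) (Pd j) = 0) ∧
  (∀ i j, sbrR D P true true 0 (Pd j) (X i) = if i = j then V else 0) ∧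
  (∀ i, sbrR D P false true 0 V (X i) = D (X i)) ∧
  (∀ i, sbrR D P true false 0 (X i) V = D (X i)) ∧
  (∀ i, sbrR D P true false 1 (X i) V = (2 : k) • X i) ∧
  (∀ j, sbrR D P true false 0 (Pd j) V = 0) ∧
  (∀ j, sbrR D P true false 1 (Pd j) V = Pd j) ∧
  (∀ i j, sbrR D P true true 0 (X i) (X j)
      = ((2 : k))⁻¹ • D (sbrR D P true true 1 (X i) (X j))) ∧
  (sbrR D P false false 0 V V = D V) ∧
  (sbrR D P false false 1 V V = (2 : k) • V) ∧
  (∀ m, 2 ≤ m →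
    (∀ i j, sbrR D P true true m (X i) (X j) = 0) ∧
    (∀ j, sbrR D P false true m V (Pd j) = 0) ∧
    (∀ i j, sbrR D P true true m (X i) (Pd j) = 0) ∧
    (∀ i, sbrR D P false true m V (X i) = 0) ∧
    sbrR D P false false m V V = 0)

end BasicDefs
set_option maxSynthPendingDepth 5

/-! ### The algebra `Aₙ` and the conformal algebra `W = k[D] ⊗ Aₙ[v]` -/

/-- Generators of the algebra `Aₙ`: `xi i` stands for `ξᵢ`, `pa i` for `∂ᵢ`. -/
inductive WGen (n : ℕ) : Type
  | xi : Fin n → WGen n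
  | pa : Fin n → WGen n

/-- The defining relations of `Aₙ`:
`ξᵢξⱼ + ξⱼξᵢ = 0`, `∂ᵢ∂ⱼ + ∂ⱼ∂ᵢ = 0`, `∂ᵢξⱼ + ξⱼ∂ᵢ = δᵢⱼ·1`. -/
inductive ARel (k : Type) [Field k] (n : ℕ) :
    FreeAlgebra k (WGen n) → FreeAlgebra k (WGen n) → Prop
  | xixi (i j : Fin n) : ARel k n
      (FreeAlgebra.ι k (WGen.xi i) * FreeAlgebra.ι k (WGen.xi j)
        + FreeAlgebra.ι k (WGen.xi j) * FreeAlgebra.ι k (WGen.xi i)) 0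
  | papa (i j : Fin n) : ARel k n
      (FreeAlgebra.ι k (WGen.pa i) * FreeAlgebra.ι k (WGen.pa j)
        + FreeAlgebra.ι k (WGen.pa j) * FreeAlgebra.ι k (WGen.pa i)) 0
  | paxi (i j : Fin n) : ARel k n
      (FreeAlgebra.ι k (WGen.pa i) * FreeAlgebra.ι k (WGen.xi j)
        + FreeAlgebra.ι k (WGen.xi j) * FreeAlgebra.ι k (WGen.pa i))
      (if i = j then 1 else 0)

/-- The algebra `Aₙ`. -/
abbrev An (k : Type) [Field k] (n : ℕ) := RingQuot (ARel k n)

/-- `Aₙ[v]`: polynomials over `Aₙ` in the variable `v` (= `Polynomial.X`). -/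
abbrev Av (k : Type) [Field k] (n : ℕ) := Polynomial (An k n)

/-- `W = k[D] ⊗ Aₙ[v]`, realized as polynomials in the (outer) variable `D`
with coefficients in `Aₙ[v]`; the element `Dᵗ ⊗ w` is `(monomial t) w`. -/
abbrev Wc (k : Type) [Field k] (n : ℕ) := Polynomial (Av k n)

/-- The generator `ξᵢ ∈ Aₙ`. -/
noncomputable def xg (k : Type) [Field k] (n : ℕ) (i : Fin n) : An k n :=
  RingQuot.mkAlgHom k (ARel k n) (FreeAlgebra.ι k (WGen.xi i))

/-- The generator `∂ᵢ ∈ Aₙ`. -/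
noncomputable def dg (k : Type) [Field k] (n : ℕ) (i : Fin n) : An k n :=
  RingQuot.mkAlgHom k (ARel k n) (FreeAlgebra.ι k (WGen.pa i))

/-- The element `v = 1 ⊗ v ∈ W`. -/
noncomputable def vW (k : Type) [Field k] (n : ℕ) : Wc k n :=
  Polynomial.C Polynomial.X

/-- The element `ξᵢ = 1 ⊗ ξᵢ ∈ W`. -/
noncomputable def xiW (k : Type) [Field k] (n : ℕ) (i : Fin n) : Wc k n :=
  Polynomial.C (Polynomial.C (xg k n i))

/-- The element `∂ᵢ = 1 ⊗ ∂ᵢ ∈ W`. -/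
noncomputable def paW (k : Type) [Field k] (n : ℕ) (i : Fin n) : Wc k n :=
  Polynomial.C (Polynomial.C (dg k n i))

/-- The element `v - D = 1 ⊗ v - D ⊗ 1 ∈ W`. -/
noncomputable def vmD (k : Type) [Field k] (n : ℕ) : Wc k n :=
  (Polynomial.C (Polynomial.X : Av k n) : Wc k n) - (Polynomial.X : Wc k n)

/-- The map `D` on `W`: multiplication by the outer variable. -/
noncomputable def Dm (k : Type) [Field k] (n : ℕ) : Wc k n →ₗ[k] Wc k n :=
  LinearMap.mulLeft k (Polynomial.X : Wc k n)

/-- The condition characterizing the conformal products of `W`: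
`(1 ⊗ f) ∘ₘ (1 ⊗ g) = 1 ⊗ f·(∂ᵐ g/∂vᵐ)` together with axioms (C2) and (C3). -/
def IsWProd (k : Type) [Field k] (n : ℕ)
    (P : ℕ → Wc k n →ₗ[k] Wc k n →ₗ[k] Wc k n) : Prop :=
  (∀ (m : ℕ) (f g : Av k n),
      P m (Polynomial.C f) (Polynomial.C g)
        = Polynomial.C (f * (fun q => Polynomial.derivative q)^[m] g)) ∧
  (∀ (m : ℕ) (a b : Wc k n), P m (Dm k n a) b = -((m : k)) • P (m - 1) a b) ∧
  (∀ (m : ℕ) (a b : Wc k n),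
      P m a (Dm k n b) = Dm k n (P m a b) + (m : k) • P (m - 1) a b)

/-- The locality function `N_W(x,y) = min {N | x ∘ₘ y = 0 for all m ≥ N}`. -/
noncomputable def locNW (k : Type) [Field k] (n : ℕ)
    (P : ℕ → Wc k n →ₗ[k] Wc k n →ₗ[k] Wc k n) (x y : Wc k n) : ℕ :=
  sInf {N : ℕ | ∀ m, N ≤ m → P m x y = 0}

/-- The smallest `D`-invariant subspace of `W` closed under all the products and
containing a set `S`. -/
noncomputable def confCl (k : Type) [Field k] (n : ℕ)
    (P : ℕ → Wc k n →ₗ[k] Wc k n →ₗ[k] Wc k n) (S : Set (Wc k n)) :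
    Submodule k (Wc k n) :=
  sInf {U : Submodule k (Wc k n) | S ⊆ U ∧ (∀ x ∈ U, Dm k n x ∈ U) ∧
    ∀ (m : ℕ), ∀ x ∈ U, ∀ y ∈ U, P m x y ∈ U}

/-- The conformal subalgebra `C₁ ⊆ W`, generated by `v - D`, `(v - D)ξᵢ`, `∂ᵢ`. -/
noncomputable def C1sub (k : Type) [Field k] (n : ℕ)
    (P : ℕ → Wc k n →ₗ[k] Wc k n →ₗ[k] Wc k n) : Submodule k (Wc k n) :=
  confCl k n P
    ({vmD k n} ∪ Set.range (fun i => vmD k n * xiW k n i) ∪ Set.range (paW k n))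

/-- The conformal subalgebra `C₂ ⊆ W`, generated by `v`, `vξᵢ`, `∂ᵢ`. -/
noncomputable def C2sub (k : Type) [Field k] (n : ℕ)
    (P : ℕ → Wc k n →ₗ[k] Wc k n →ₗ[k] Wc k n) : Submodule k (Wc k n) :=
  confCl k n P
    ({vW k n} ∪ Set.range (fun i => vW k n * xiW k n i) ∪ Set.range (paW k n))
/-! ### Auxiliary development for stmt_6 -/

namespace Stmt6Aux

open Polynomial CliffordAlgebra

variable (k : Type) [Field k] [CharZero k] (n : ℕ)

/-- The exterior algebra on `kⁿ`, on which `Aₙ` acts. -/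
noncomputable abbrev EE := ExteriorAlgebra k (Fin n → k)

noncomputable def ee (i : Fin n) : Fin n → k := Pi.single i 1
noncomputable def dd (i : Fin n) : Module.Dual k (Fin n → k) := LinearMap.proj i

omit [CharZero k] in
lemma dd_ee (i j : Fin n) : dd k n i (ee k n j) = if i = j then 1 else 0 := by
  simp [dd, ee, Pi.single_apply, eq_comm]

noncomputable def rep0 : FreeAlgebra k (WGen n) →ₐ[k] Module.End k (EE k n) :=
  FreeAlgebra.lift k fun g => match g with
    | .xi i => LinearMap.mulLeft k (ExteriorAlgebra.ι k (ee k n i))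
    | .pa i => contractLeft (dd k n i)

omit [CharZero k] in
lemma rep0_rel : ∀ ⦃a b⦄, ARel k n a b → rep0 k n a = rep0 k n b := by
  intro a b h
  induction h with
  | xixi i j =>
    refine LinearMap.ext fun x => ?_
    simp only [map_add, map_mul, rep0, FreeAlgebra.lift_ι_apply, LinearMap.add_apply,
      Module.End.mul_apply, LinearMap.mulLeft_apply, map_zero, LinearMap.zero_apply]
    rw [← mul_assoc, ← mul_assoc, ← add_mul, ExteriorAlgebra.ι_add_mul_swap, zero_mul]
  | papa i j =>
    refine LinearMap.ext fun x => ?_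
    simp only [map_add, map_mul, rep0, FreeAlgebra.lift_ι_apply, LinearMap.add_apply,
      Module.End.mul_apply, map_zero, LinearMap.zero_apply]
    rw [contractLeft_comm, neg_add_cancel]
  | paxi i j =>
    refine LinearMap.ext fun x => ?_
    simp only [map_add, map_mul, rep0, FreeAlgebra.lift_ι_apply, LinearMap.add_apply,
      Module.End.mul_apply, LinearMap.mulLeft_apply]
    rw [contractLeft_ι_mul, dd_ee, sub_add_cancel]
    split <;> simp

noncomputable def rep : An k n →ₐ[k] Module.End k (EE k n) :=
  RingQuot.liftAlgHom k ⟨rep0 k n, rep0_rel k n⟩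

omit [CharZero k] in
lemma rep_xg (i : Fin n) (x : EE k n) :
    rep k n (xg k n i) x = ExteriorAlgebra.ι k (ee k n i) * x := by
  rw [rep, xg, RingQuot.liftAlgHom_mkAlgHom_apply, rep0, FreeAlgebra.lift_ι_apply]
  rfl

omit [CharZero k] in
lemma rep_dg (i : Fin n) (x : EE k n) :
    rep k n (dg k n i) x = contractLeft (dd k n i) x := by
  rw [rep, dg, RingQuot.liftAlgHom_mkAlgHom_apply, rep0, FreeAlgebra.lift_ι_apply]

omit [CharZero k] in
lemma an_one_ne : (1 : An k n) ≠ 0 := by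
  intro h
  have h1 : rep k n 1 (1 : EE k n) = 1 := by simp
  rw [h, map_zero, LinearMap.zero_apply] at h1
  exact one_ne_zero h1.symm

noncomputable instance : Nontrivial (An k n) := ⟨⟨1, 0, an_one_ne k n⟩⟩

omit [CharZero k] in
lemma rep_dx_one (i : Fin n) :
    rep k n (dg k n i) (rep k n (xg k n i) 1) = 1 := by
  rw [rep_xg, rep_dg, mul_one, contractLeft_ι, dd_ee, if_pos rfl, map_one]

omit [CharZero k] in
lemma xg_ne (i : Fin n) : xg k n i ≠ 0 := by
  intro h
  have h1 := rep_dx_one k n i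
  rw [h, map_zero, LinearMap.zero_apply, map_zero] at h1
  exact one_ne_zero h1.symm

omit [CharZero k] in
lemma dg_ne (i : Fin n) : dg k n i ≠ 0 := by
  intro h
  have h1 := rep_dx_one k n i
  rw [h, map_zero, LinearMap.zero_apply] at h1
  exact one_ne_zero h1.symm

omit [CharZero k] in
lemma dgxg_ne (i j : Fin n) : dg k n i * xg k n j ≠ 0 := by
  intro h
  by_cases hij : i = j
  · subst hij
    have h1 := rep_dx_one k n i
    rw [← Module.End.mul_apply, ← map_mul, h, map_zero, LinearMap.zero_apply] at h1
    exact one_ne_zero h1.symm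
  · have h1 : rep k n (dg k n j) (rep k n (dg k n i * xg k n j)
        (rep k n (xg k n i) 1)) = -1 := by
      rw [rep_xg, mul_one, map_mul, Module.End.mul_apply, rep_xg, rep_dg, rep_dg,
        contractLeft_ι_mul, dd_ee, if_neg hij, zero_smul, zero_sub,
        contractLeft_ι, dd_ee, if_pos rfl, map_one, mul_one, map_neg,
        contractLeft_ι, dd_ee, if_pos rfl, map_one]
    rw [h, map_zero, LinearMap.zero_apply, map_zero] at h1
    exact one_ne_zero (neg_eq_zero.mp h1.symm)

omit [CharZero k] in
lemma xgdg_ne (i j : Fin n) : xg k n i * dg k n j ≠ 0 := by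
  intro h
  have h1 : rep k n (dg k n i) (rep k n (xg k n i * dg k n j)
      (ExteriorAlgebra.ι k (ee k n j))) = 1 := by
    rw [map_mul, Module.End.mul_apply, rep_dg, rep_xg, rep_dg]
    rw [contractLeft_ι, dd_ee, if_pos rfl, map_one, mul_one]
    rw [contractLeft_ι, dd_ee, if_pos rfl, map_one]
  rw [h, map_zero, LinearMap.zero_apply, map_zero] at h1
  exact one_ne_zero h1.symm

omit [CharZero k] in
lemma xgxg_ne (i j : Fin n) (hij : i ≠ j) : xg k n i * xg k n j ≠ 0 := by
  intro h
  have h1 : rep k n (dg k n j) (rep k n (dg k n i)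
      (rep k n (xg k n i * xg k n j) 1)) = 1 := by
    rw [map_mul, Module.End.mul_apply, rep_xg, rep_xg, mul_one, rep_dg, rep_dg]
    rw [contractLeft_ι_mul, dd_ee, if_pos rfl, one_smul,
      contractLeft_ι, dd_ee, if_neg hij, map_zero, mul_zero, sub_zero]
    rw [contractLeft_ι, dd_ee, if_pos rfl, map_one]
  rw [h, map_zero, LinearMap.zero_apply, map_zero, map_zero] at h1
  exact one_ne_zero h1.symm

omit [CharZero k] in
lemma dgdg_ne (i j : Fin n) (hij : i ≠ j) : dg k n i * dg k n j ≠ 0 := by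
  intro h
  have h1 : rep k n (dg k n i * dg k n j) (rep k n (xg k n j)
      (rep k n (xg k n i) 1)) = 1 := by
    rw [map_mul, Module.End.mul_apply, rep_xg, rep_xg, mul_one, rep_dg, rep_dg]
    rw [contractLeft_ι_mul, dd_ee, if_pos rfl, one_smul,
      contractLeft_ι, dd_ee, if_neg (Ne.symm hij), map_zero, mul_zero, sub_zero]
    rw [contractLeft_ι, dd_ee, if_pos rfl, map_one]
  rw [h, map_zero, LinearMap.zero_apply] at h1
  exact one_ne_zero h1.symm

lemma half_cancel {x : An k n} (h : x + x = 0) : x = 0 := by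
  have h2 : (2 : k) • x = 0 := by rw [two_smul]; exact h
  calc x = ((2 : k)⁻¹ * 2) • x := by
        rw [inv_mul_cancel₀ (by norm_num : (2:k) ≠ 0), one_smul]
    _ = (2 : k)⁻¹ • ((2 : k) • x) := by rw [smul_smul]
    _ = 0 := by rw [h2, smul_zero]

lemma xg_sq (i : Fin n) : xg k n i * xg k n i = 0 := by
  have h := RingQuot.mkAlgHom_rel k (ARel.xixi (k := k) (n := n) i i)
  rw [map_add, map_mul, map_zero] at h
  exact half_cancel k n h

lemma dg_sq (i : Fin n) : dg k n i * dg k n i = 0 := by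
  have h := RingQuot.mkAlgHom_rel k (ARel.papa (k := k) (n := n) i i)
  rw [map_add, map_mul, map_zero] at h
  exact half_cancel k n h

/-! #### Locality helpers and polynomial computations -/

omit [CharZero k] in
lemma locNW_eq_of (Pr : ℕ → Wc k n →ₗ[k] Wc k n →ₗ[k] Wc k n) (x y : Wc k n) (N : ℕ)
    (h0 : ∀ m, N ≤ m → Pr m x y = 0) (h1 : Pr (N - 1) x y ≠ 0) :
    locNW k n Pr x y = N := by
  rw [locNW]
  refine le_antisymm (Nat.sInf_le h0) ?_
  by_contra hc
  push_neg at hc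
  have hmem := Nat.sInf_mem (⟨N, h0⟩ :
    Set.Nonempty {N : ℕ | ∀ m, N ≤ m → Pr m x y = 0})
  exact h1 (hmem (N - 1) (by omega))

omit [CharZero k] in
lemma locNW_eq_zero (Pr : ℕ → Wc k n →ₗ[k] Wc k n →ₗ[k] Wc k n) (x y : Wc k n)
    (h0 : ∀ m, Pr m x y = 0) : locNW k n Pr x y = 0 := by
  rw [locNW]
  exact Nat.eq_zero_of_le_zero (Nat.sInf_le fun m _ => h0 m)

omit [CharZero k] in
lemma iterD_hi (g : Av k n) (N m : ℕ) (h : g.natDegree < N) (hm : N ≤ m) :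
    (fun q => Polynomial.derivative q)^[m] g = 0 :=
  Polynomial.iterate_derivative_eq_zero (lt_of_lt_of_le h hm)

omit [CharZero k] in
lemma natDeg_XC (a : An k n) : ((Polynomial.X : Av k n) * Polynomial.C a).natDegree < 2 := by
  have h := Polynomial.natDegree_mul_le (p := (Polynomial.X : Av k n)) (q := Polynomial.C a)
  haveI : Nontrivial (An k n) := ⟨⟨1, 0, an_one_ne k n⟩⟩
  rw [Polynomial.natDegree_X, Polynomial.natDegree_C] at h
  omega

omit [CharZero k] in
lemma D1_X : (fun q => Polynomial.derivative q)^[1] (Polynomial.X : Av k n) = 1 := by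
  simp

omit [CharZero k] in
lemma D1_XC (a : An k n) :
    (fun q => Polynomial.derivative q)^[1]
      ((Polynomial.X : Av k n) * Polynomial.C a) = Polynomial.C a := by
  rw [Function.iterate_one, Polynomial.X_mul, Polynomial.derivative_C_mul,
    Polynomial.derivative_X, mul_one]

omit [CharZero k] in
lemma D0 (g : Av k n) : (fun q => Polynomial.derivative q)^[0] g = g := rfl

omit [CharZero k] in
lemma XC_ne (a : An k n) (ha : a ≠ 0) :
    (Polynomial.X : Av k n) * Polynomial.C a ≠ 0 := by
  intro h
  apply ha
  have h2 := congrArg (fun p => Polynomial.coeff p 1) h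
  simpa [Polynomial.coeff_X_mul] using h2

omit [CharZero k] in
lemma XC_mul_XC (a b : An k n) :
    ((Polynomial.X : Av k n) * Polynomial.C a) * (Polynomial.X * Polynomial.C b)
      = Polynomial.X * Polynomial.X * Polynomial.C (a * b) := by
  rw [mul_assoc, ← mul_assoc (Polynomial.C a), ← Polynomial.X_mul, mul_assoc,
    ← Polynomial.C_mul, ← mul_assoc]

omit [CharZero k] in
lemma XC_mul_C (a b : An k n) :
    ((Polynomial.X : Av k n) * Polynomial.C a) * Polynomial.C b
      = Polynomial.X * Polynomial.C (a * b) := by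
  rw [mul_assoc, ← Polynomial.C_mul]

omit [CharZero k] in
lemma C_mul_XC (a b : An k n) :
    (Polynomial.C a : Av k n) * (Polynomial.X * Polynomial.C b)
      = Polynomial.X * Polynomial.C (a * b) := by
  rw [← mul_assoc, ← Polynomial.X_mul, mul_assoc, ← Polynomial.C_mul]

end Stmt6Aux

/-- the locality function induced by `φ₂` on the generators equals `N₂`. -/
theorem stmt_6 (k : Type) [Field k] [CharZero k] (n : ℕ) (hn : 1 ≤ n)
    (Pr : ℕ → Wc k n →ₗ[k] Wc k n →ₗ[k] Wc k n) (hPr : IsWProd k n Pr) :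
    locNW k n Pr (vW k n) (vW k n) = 2 ∧
    (∀ j, locNW k n Pr (vW k n) (vW k n * xiW k n j) = 2) ∧
    (∀ i, locNW k n Pr (vW k n * xiW k n i) (vW k n) = 2) ∧
    (∀ i, locNW k n Pr (paW k n i) (vW k n) = 2) ∧
    (∀ i j, locNW k n Pr (paW k n i) (vW k n * xiW k n j) = 2) ∧
    (∀ i j, i ≠ j → locNW k n Pr (vW k n * xiW k n i) (vW k n * xiW k n j) = 2) ∧
    (∀ i, locNW k n Pr (vW k n * xiW k n i) (vW k n * xiW k n i) = 0) ∧
    (∀ j, locNW k n Pr (vW k n) (paW k n j) = 1) ∧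
    (∀ i j, locNW k n Pr (vW k n * xiW k n i) (paW k n j) = 1) ∧
    (∀ i j, i ≠ j → locNW k n Pr (paW k n i) (paW k n j) = 1) ∧
    (∀ i, locNW k n Pr (paW k n i) (paW k n i) = 0) := by
  classical
  haveI : Nontrivial (An k n) := ⟨⟨1, 0, Stmt6Aux.an_one_ne k n⟩⟩
  obtain ⟨hP, -, -⟩ := hPr
  have hvx : ∀ i, vW k n * xiW k n i
      = Polynomial.C ((Polynomial.X : Av k n) * Polynomial.C (xg k n i)) := by
    intro i; rw [vW, xiW, ← Polynomial.C_mul]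
  have hdX : (Polynomial.X : Av k n).natDegree < 2 := by
    rw [Polynomial.natDegree_X]; omega
  have hdC : ∀ a : An k n, (Polynomial.C a).natDegree < 1 := by
    intro a; rw [Polynomial.natDegree_C]; omega
  refine ⟨?_, ?_, ?_, ?_, ?_, ?_, ?_, ?_, ?_, ?_, ?_⟩
  · -- N(v,v) = 2
    refine Stmt6Aux.locNW_eq_of k n Pr _ _ 2 (fun m hm => ?_) ?_
    · rw [vW, hP, Stmt6Aux.iterD_hi k n _ 2 m hdX hm, mul_zero, map_zero]
    · show Pr 1 _ _ ≠ 0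
      rw [vW, hP, Stmt6Aux.D1_X, mul_one]
      simp only [ne_eq, Polynomial.C_eq_zero]
      exact Polynomial.X_ne_zero
  · -- N(v, vξⱼ) = 2
    intro j
    refine Stmt6Aux.locNW_eq_of k n Pr _ _ 2 (fun m hm => ?_) ?_
    · rw [hvx j, vW, hP,
        Stmt6Aux.iterD_hi k n _ 2 m (Stmt6Aux.natDeg_XC k n _) hm, mul_zero, map_zero]
    · show Pr 1 _ _ ≠ 0
      rw [hvx j, vW, hP, Stmt6Aux.D1_XC]
      simp only [ne_eq, Polynomial.C_eq_zero]
      exact Stmt6Aux.XC_ne k n _ (Stmt6Aux.xg_ne k n j)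
  · -- N(vξᵢ, v) = 2
    intro i
    refine Stmt6Aux.locNW_eq_of k n Pr _ _ 2 (fun m hm => ?_) ?_
    · rw [hvx i, vW, hP, Stmt6Aux.iterD_hi k n _ 2 m hdX hm, mul_zero, map_zero]
    · show Pr 1 _ _ ≠ 0
      rw [hvx i, vW, hP, Stmt6Aux.D1_X, mul_one]
      simp only [ne_eq, Polynomial.C_eq_zero]
      exact Stmt6Aux.XC_ne k n _ (Stmt6Aux.xg_ne k n i)
  · -- N(∂ᵢ, v) = 2
    intro i
    refine Stmt6Aux.locNW_eq_of k n Pr _ _ 2 (fun m hm => ?_) ?_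
    · rw [paW, vW, hP, Stmt6Aux.iterD_hi k n _ 2 m hdX hm, mul_zero, map_zero]
    · show Pr 1 _ _ ≠ 0
      rw [paW, vW, hP, Stmt6Aux.D1_X, mul_one]
      simp only [ne_eq, Polynomial.C_eq_zero]
      exact Stmt6Aux.dg_ne k n i
  · -- N(∂ᵢ, vξⱼ) = 2
    intro i j
    refine Stmt6Aux.locNW_eq_of k n Pr _ _ 2 (fun m hm => ?_) ?_
    · rw [paW, hvx j, hP,
        Stmt6Aux.iterD_hi k n _ 2 m (Stmt6Aux.natDeg_XC k n _) hm, mul_zero, map_zero]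
    · show Pr 1 _ _ ≠ 0
      rw [paW, hvx j, hP, Stmt6Aux.D1_XC, ← Polynomial.C_mul]
      simp only [ne_eq, Polynomial.C_eq_zero]
      exact Stmt6Aux.dgxg_ne k n i j
  · -- N(vξᵢ, vξⱼ) = 2 for i ≠ j
    intro i j hij
    refine Stmt6Aux.locNW_eq_of k n Pr _ _ 2 (fun m hm => ?_) ?_
    · rw [hvx i, hvx j, hP,
        Stmt6Aux.iterD_hi k n _ 2 m (Stmt6Aux.natDeg_XC k n _) hm, mul_zero, map_zero]
    · show Pr 1 _ _ ≠ 0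
      rw [hvx i, hvx j, hP, Stmt6Aux.D1_XC, Stmt6Aux.XC_mul_C]
      simp only [ne_eq, Polynomial.C_eq_zero]
      exact Stmt6Aux.XC_ne k n _ (Stmt6Aux.xgxg_ne k n i j hij)
  · -- N(vξᵢ, vξᵢ) = 0
    intro i
    refine Stmt6Aux.locNW_eq_zero k n Pr _ _ (fun m => ?_)
    rcases m with _ | _ | m
    · rw [hvx i, hP, Function.iterate_zero, id_eq, Stmt6Aux.XC_mul_XC,
        Stmt6Aux.xg_sq, Polynomial.C_0, mul_zero, Polynomial.C_0]
    · rw [hvx i, hP, Stmt6Aux.D1_XC, Stmt6Aux.XC_mul_C, Stmt6Aux.xg_sq,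
        Polynomial.C_0, mul_zero, Polynomial.C_0]
    · rw [hvx i, hP,
        Stmt6Aux.iterD_hi k n _ 2 (m + 2) (Stmt6Aux.natDeg_XC k n _) (by omega),
        mul_zero, map_zero]
  · -- N(v, ∂ⱼ) = 1
    intro j
    refine Stmt6Aux.locNW_eq_of k n Pr _ _ 1 (fun m hm => ?_) ?_
    · rw [vW, paW, hP, Stmt6Aux.iterD_hi k n _ 1 m (hdC _) hm, mul_zero, map_zero]
    · show Pr 0 _ _ ≠ 0
      rw [vW, paW, hP, Function.iterate_zero, id_eq]
      simp only [ne_eq, Polynomial.C_eq_zero]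
      exact Stmt6Aux.XC_ne k n _ (Stmt6Aux.dg_ne k n j)
  · -- N(vξᵢ, ∂ⱼ) = 1
    intro i j
    refine Stmt6Aux.locNW_eq_of k n Pr _ _ 1 (fun m hm => ?_) ?_
    · rw [hvx i, paW, hP, Stmt6Aux.iterD_hi k n _ 1 m (hdC _) hm, mul_zero, map_zero]
    · show Pr 0 _ _ ≠ 0
      rw [hvx i, paW, hP, Function.iterate_zero, id_eq, Stmt6Aux.XC_mul_C]
      simp only [ne_eq, Polynomial.C_eq_zero]
      exact Stmt6Aux.XC_ne k n _ (Stmt6Aux.xgdg_ne k n i j)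
  · -- N(∂ᵢ, ∂ⱼ) = 1 for i ≠ j
    intro i j hij
    refine Stmt6Aux.locNW_eq_of k n Pr _ _ 1 (fun m hm => ?_) ?_
    · rw [paW, paW, hP, Stmt6Aux.iterD_hi k n _ 1 m (hdC _) hm, mul_zero, map_zero]
    · show Pr 0 _ _ ≠ 0
      rw [paW, paW, hP, Function.iterate_zero, id_eq, ← Polynomial.C_mul]
      simp only [ne_eq, Polynomial.C_eq_zero]
      exact Stmt6Aux.dgdg_ne k n i j hij
  · -- N(∂ᵢ, ∂ᵢ) = 0
    intro i
    refine Stmt6Aux.locNW_eq_zero k n Pr _ _ (fun m => ?_)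
    rcases m with _ | m
    · rw [paW, hP, Function.iterate_zero, id_eq, ← Polynomial.C_mul,
        Stmt6Aux.dg_sq, Polynomial.C_0, Polynomial.C_0]
    · rw [paW, hP, Stmt6Aux.iterD_hi k n _ 1 (m + 1) (hdC _) (by omega),
        mul_zero, map_zero]
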